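/- Let η₁ ≥ ⋯ ≥ ηₙ be real numbers with ∑ η_i = 0 and ∑ η_i² = 1, where n > 2. If η₁ − η_{n−1} > 1, then η₂ − η_n ≤ 1. -/
import Mathlib


theorem stmt_2 (n : ℕ) (hn : 2 < n) (η : Fin n → ℝ) (hmono : Antitone η)
    (hsum : ∑ i, η i = 0) (hsq : ∑ i, (η i) ^ 2 = 1)
    (hgap : η ⟨0, by omega⟩ - η ⟨n - 2, by omega⟩ > 1) :
    η ⟨1, by omega⟩ - η ⟨n - 1, by omega⟩ ≤ 1 := by
  have key : ∀ S : Finset (Fin n), ∑ i ∈ S, (η i)^2 ≤ 1 := by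
    intro S
    rw [← hsq]
    exact Finset.sum_le_sum_of_subset_of_nonneg (Finset.subset_univ S)
      (fun i _ _ => sq_nonneg _)
  set a := η ⟨0, by omega⟩ with ha_def
  set b := η ⟨1, by omega⟩ with hb_def
  set c := η ⟨n-2, by omega⟩ with hc_def
  set d := η ⟨n-1, by omega⟩ with hd_def
  have hab : b ≤ a := hmono (by simp [Fin.le_def])
  have hcd : d ≤ c := hmono (by simp [Fin.le_def]; omega)
  have hd1 : d^2 ≤ 1 := by
    have := key {⟨n-1, by omega⟩}
    simpa using this
  have hdge : -1 ≤ d := by nlinarith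
  by_cases hb : b ≤ 0
  · linarith
  push_neg at hb
  by_cases hc : 0 ≤ c
  · exfalso
    have hab2 : a^2 + b^2 ≤ 1 := by
      have := key {⟨0, by omega⟩, ⟨1, by omega⟩}
      rw [Finset.sum_insert (by simp [Fin.ext_iff]), Finset.sum_singleton] at this
      exact this
    have ha : 0 < a := lt_of_lt_of_le hb hab
    nlinarith
  push_neg at hc
  have hn4 : 4 ≤ n := by
    by_contra h
    have heq : (⟨1, by omega⟩ : Fin n) = ⟨n-2, by omega⟩ := by
      simp [Fin.ext_iff]; omega
    have hbc : b = c := congrArg η heq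
    linarith
  by_contra hgoal
  push_neg at hgoal
  have hsq4 : a^2 + b^2 + c^2 + d^2 ≤ 1 := by
    have := key {⟨0, by omega⟩, ⟨1, by omega⟩, ⟨n-2, by omega⟩, ⟨n-1, by omega⟩}
    rw [Finset.sum_insert (by simp [Fin.ext_iff]; omega),
        Finset.sum_insert (by simp [Fin.ext_iff]; omega),
        Finset.sum_insert (by simp [Fin.ext_iff]; omega),
        Finset.sum_singleton] at this
    linarith
  have hc1 : -1 ≤ c := by nlinarith
  have h1 : (1 + c)^2 < a^2 := by nlinarith
  have h2 : (1 + d)^2 < b^2 := by nlinarith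
  nlinarith [sq_nonneg (c + 1/2), sq_nonneg (d + 1/2)]
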